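/- Let σ be a B-avoiding permutation of {1,...,n-1}. Then the permutation obtained by increasing every value of σ by 1, replacing the value 2 by 1, and appending the value 2 at the end is a B-avoiding permutation of {1,...,n}. -/

import Mathlib

/-- `l` is a permutation of `{1, ..., n}`, viewed as the sequence of its values. -/
def IsPermOf (l : List ℕ) (n : ℕ) : Prop := l.Perm (List.range' 1 n)

/-- `l` is B-avoiding: there are no indices `a < b < c < d` with
`max {l a, l c} < min {l b, l d}`. -/
def BAvoid (l : List ℕ) : Prop :=
  ∀ a b c d : Fin l.length, a < b → b < c → c < d →
    ¬ (max (l.get a) (l.get c) < min (l.get b) (l.get d))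

/-- increase all values by 1 and insert `1` immediately before the value `2`. -/
def fBefore (σ : List ℕ) : List ℕ :=
  ((σ.map (· + 1)).take ((σ.map (· + 1)).idxOf 2)) ++
    1 :: ((σ.map (· + 1)).drop ((σ.map (· + 1)).idxOf 2))

/-- increase all values by 1 and insert `1` immediately after the value `2`. -/
def fAfter (σ : List ℕ) : List ℕ :=
  ((σ.map (· + 1)).take ((σ.map (· + 1)).idxOf 2 + 1)) ++
    1 :: ((σ.map (· + 1)).drop ((σ.map (· + 1)).idxOf 2 + 1))

/-- increase all values by 1 and append `1` at the end. -/
def fEnd (σ : List ℕ) : List ℕ := σ.map (· + 1) ++ [1]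

/-- increase all values by 1, replace the value `2` by `1`, and append `2` at the end. -/
def fBump (σ : List ℕ) : List ℕ :=
  (σ.map (· + 1)).map (fun x => if x = 2 then 1 else x) ++ [2]

theorem stmt6 (n : ℕ) (hn : 2 ≤ n) (σ : List ℕ)
    (hσ : IsPermOf σ (n - 1)) (hB : BAvoid σ) :
    IsPermOf (fBump σ) n ∧ BAvoid (fBump σ) := by
  obtain ⟨k, rfl⟩ : ∃ k, n = k + 2 := ⟨n - 2, by omega⟩
  set h : ℕ → ℕ := fun x => if x = 1 then 1 else x + 1 with hh
  have hfb : fBump σ = σ.map h ++ [2] := by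
    simp only [fBump, List.map_map]
    congr 1
    apply List.map_congr_left
    intro x _
    simp only [Function.comp, hh]
    split_ifs <;> omega
  have hmem : ∀ x ∈ σ, 1 ≤ x := by
    intro x hx
    have := (hσ.mem_iff).mp hx
    rw [List.mem_range'_1] at this
    omega
  have hnodup : σ.Nodup := hσ.nodup_iff.mpr (List.nodup_range' (s := 1) (n := k + 1))
  constructor
  · rw [hfb, IsPermOf]
    have h1 : (σ.map h).Perm ((List.range' 1 (k+1)).map h) := hσ.map h
    have h2 : List.range' 1 (k+1) = 1 :: List.range' 2 k := by
      rw [List.range'_succ]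
    have h3 : (List.range' 2 k).map h = List.range' 3 k := by
      rw [show (List.range' 2 k).map h = (List.range' 2 k).map (fun x => 1 + x) from ?_,
        List.map_add_range']
      apply List.map_congr_left
      intro x hx
      rw [List.mem_range'_1] at hx
      simp only [hh]
      split_ifs <;> omega
    have h4 : (σ.map h).Perm (1 :: List.range' 3 k) := by
      rw [h2, List.map_cons, h3] at h1; simpa [hh] using h1
    have h5 : (σ.map h ++ [2]).Perm (1 :: 2 :: List.range' 3 k) :=
      (h4.append_right [2]).trans
        ((List.perm_append_singleton 2 (List.range' 3 k)).cons 1)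
    have h6 : List.range' 1 (k+2) = 1 :: 2 :: List.range' 3 k := by
      rw [List.range'_succ, List.range'_succ]
    rw [h6]; exact h5
  · intro a b c d hab hbc hcd hlt
    have hlenf : (fBump σ).length = σ.length + 1 := by simp [hfb]
    have hget : ∀ (i : Fin (fBump σ).length) (hi : i.val < σ.length),
        (fBump σ).get i = h (σ.get ⟨i.val, hi⟩) := by
      intro i hi
      simp only [List.get_eq_getElem, hfb]
      rw [List.getElem_append_left (by simpa using hi), List.getElem_map]
    have hab' : a.val < b.val := hab
    have hbc' : b.val < c.val := hbc
    have hcd' : c.val < d.val := hcd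
    have hdl : d.val < σ.length + 1 := by have := d.isLt; omega
    have ha' : a.val < σ.length := by omega
    have hb' : b.val < σ.length := by omega
    have hc' : c.val < σ.length := by omega
    have hmono : ∀ x y, 1 ≤ x → 1 ≤ y → (h x < h y ↔ x < y) := by
      intro x y hx hy
      simp only [hh]
      split_ifs <;> omega
    by_cases hd : d.val < σ.length
    · have e1 := hget a ha'
      have e2 := hget b hb'
      have e3 := hget c hc'
      have e4 := hget d hd
      rw [e1, e2, e3, e4] at hlt
      have m1 : ∀ (i : Fin σ.length), 1 ≤ σ.get i := fun i => hmem _ (σ.get_mem i)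
      refine hB ⟨a, ha'⟩ ⟨b, hb'⟩ ⟨c, hc'⟩ ⟨d, hd⟩ hab hbc hcd ?_
      simp only [max_lt_iff, lt_min_iff] at hlt ⊢
      obtain ⟨⟨p1, p2⟩, p3, p4⟩ := hlt
      exact ⟨⟨(hmono _ _ (m1 _) (m1 _)).mp p1, (hmono _ _ (m1 _) (m1 _)).mp p2⟩,
        (hmono _ _ (m1 _) (m1 _)).mp p3, (hmono _ _ (m1 _) (m1 _)).mp p4⟩
    · have hdv : d.val = σ.length := by omega
      have e4 : (fBump σ).get d = 2 := by
        simp only [List.get_eq_getElem, hfb]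
        rw [List.getElem_append_right (by simpa using hd)]
        simp [hdv]
      have e1 := hget a ha'
      have e3 := hget c hc'
      rw [e1, e3, e4] at hlt
      have q : max (h (σ.get ⟨a.val, ha'⟩)) (h (σ.get ⟨c.val, hc'⟩)) < 2 :=
        lt_of_lt_of_le hlt (min_le_right _ _)
      have qa : σ.get ⟨a.val, ha'⟩ = 1 := by
        have w1 : 1 ≤ σ.get ⟨a.val, ha'⟩ := hmem _ (σ.get_mem ⟨a.val, ha'⟩)
        have w2 : h (σ.get ⟨a.val, ha'⟩) < 2 := lt_of_le_of_lt (le_max_left _ _) q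
        simp only [hh] at w2
        split_ifs at w2 with w3
        · exact w3
        · omega
      have qc : σ.get ⟨c.val, hc'⟩ = 1 := by
        have w1 : 1 ≤ σ.get ⟨c.val, hc'⟩ := hmem _ (σ.get_mem ⟨c.val, hc'⟩)
        have w2 : h (σ.get ⟨c.val, hc'⟩) < 2 := lt_of_le_of_lt (le_max_right _ _) q
        simp only [hh] at w2
        split_ifs at w2 with w3
        · exact w3
        · omega
      have heq : (⟨a.val, ha'⟩ : Fin σ.length) = ⟨c.val, hc'⟩ :=
        (hnodup.get_inj_iff).mp (by rw [qa, qc])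
      have : a.val = c.val := by simpa using heq
      omega
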